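/- Let ρ > 0, let β̂^{en} minimize the elastic net objective G(β) = (1/2)Σ_{i=1}^n (y_i − x_i'β)² + λ‖β‖₁ + (ρ/2)‖β‖₂², let J₀ = {j : β̂^{en}_j ≠ 0}, and let v = Σ_{i=1}^n (y_i − x_i'β̂^{en})x_i − ρβ̂^{en} be the dual vector. Assume max_{j∉J₀}|v_j| < λ. Let M = nΣ̂_{J₀} + ρI (which is invertible), and define η^{en}(0) = M^{-1}x_{n+1,J₀}/(1 + x_{n+1,J₀}'M^{-1}x_{n+1,J₀}), γ^{en}(0) = (x_{n+1,J₀^c} − nΣ̂_{J₀^c,J₀}M^{-1}x_{n+1,J₀})/(1 + x_{n+1,J₀}'M^{-1}x_{n+1,J₀}), and t₁ = min_{j∈J₀}(−β̂^{en}_j/η^{en}_j(0))₊₊ ∧ min_{j∈J₀^c}((sign(γ^{en}_j(0))λ − v_j)/γ^{en}_j(0))₊₊. Then for every t ∈ [0, t₁], the vector β(t) defined by β(t)_{J₀} = β̂^{en}_{J₀} + t·η^{en}(0), β(t)_{J₀^c} = 0, is the unique minimizer of the augmented elastic net objective G(β) + (1/2)(x_{n+1}'β̂^{en} + t − x_{n+1}'β)².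 That is, the piecewise linear perturb-one homotopy holds for the elastic net with nΣ̂_{J} replaced by nΣ̂_{J} + ρI. -/

import Mathlib

open scoped BigOperators Matrix

noncomputable section

/-- Euclidean inner product on `Fin p → ℝ`. -/
def dotp {p : ℕ} (a b : Fin p → ℝ) : ℝ := ∑ j, a j * b j

/-- The elastic net objective
`G(β) = (1/2)∑ᵢ (yᵢ − xᵢ'β)² + λ‖β‖₁ + (ρ/2)‖β‖₂²`. -/
def enObj {n p : ℕ} (x : Fin n → Fin p → ℝ) (y : Fin n → ℝ) (lam ρ : ℝ)
    (β : Fin p → ℝ) : ℝ :=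
  (1 / 2) * ∑ i, (y i - dotp (x i) β) ^ 2 + lam * ∑ j, |β j| + (ρ / 2) * ∑ j, (β j) ^ 2

/-- The augmented elastic net objective with `(x_{n+1}, ynew)` added as the `(n+1)`-th sample. -/
def enAug {n p : ℕ} (x : Fin n → Fin p → ℝ) (y : Fin n → ℝ) (xnew : Fin p → ℝ)
    (lam ρ : ℝ) (ynew : ℝ) (β : Fin p → ℝ) : ℝ :=
  enObj x y lam ρ β + (1 / 2) * (ynew - dotp xnew β) ^ 2

/-- The subvector `u_J` of `u` with coordinates in `J`. -/
def subv {p : ℕ} (u : Fin p → ℝ) (J : Finset (Fin p)) : ↥J → ℝ := fun a => u a.1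

/-- The matrix `M = nΣ̂_J + ρI = (∑ᵢ x_{i,J}x_{i,J}') + ρI`. -/
def enMat {n p : ℕ} (x : Fin n → Fin p → ℝ) (ρ : ℝ) (J : Finset (Fin p)) :
    Matrix ↥J ↥J ℝ :=
  Matrix.of fun a b => (∑ i, x i a.1 * x i b.1) + if a = b then ρ else 0

/-- `M⁻¹ x_{n+1,J}` where `M = nΣ̂_J + ρI`. -/
def enInvPart {n p : ℕ} (x : Fin n → Fin p → ℝ) (ρ : ℝ) (J : Finset (Fin p))
    (xnew : Fin p → ℝ) : ↥J → ℝ :=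
  (enMat x ρ J)⁻¹ *ᵥ subv xnew J

/-- The denominator `1 + x_{n+1,J}'M⁻¹x_{n+1,J}`. -/
def enDenom {n p : ℕ} (x : Fin n → Fin p → ℝ) (ρ : ℝ) (J : Finset (Fin p))
    (xnew : Fin p → ℝ) : ℝ :=
  1 + subv xnew J ⬝ᵥ enInvPart x ρ J xnew

/-- The elastic net slope vector `ηᵉⁿ(0) = M⁻¹x_{n+1,J}/(1 + x_{n+1,J}'M⁻¹x_{n+1,J})`,
extended by `0` off `J`. -/
def enEta {n p : ℕ} (x : Fin n → Fin p → ℝ) (ρ : ℝ) (J : Finset (Fin p))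
    (xnew : Fin p → ℝ) : Fin p → ℝ := fun j =>
  if h : j ∈ J then enInvPart x ρ J xnew ⟨j, h⟩ / enDenom x ρ J xnew else 0

/-- The elastic net dual slope vector
`γᵉⁿ(0) = (x_{n+1,J^c} − nΣ̂_{J^c,J}M⁻¹x_{n+1,J})/(1 + x_{n+1,J}'M⁻¹x_{n+1,J})`. -/
def enGamma {n p : ℕ} (x : Fin n → Fin p → ℝ) (ρ : ℝ) (J : Finset (Fin p))
    (xnew : Fin p → ℝ) : Fin p → ℝ := fun j =>
  (xnew j - ∑ a : ↥J, (∑ i, x i j * x i a.1) * enInvPart x ρ J xnew a) / enDenom x ρ J xnew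

/-- `rpp a b` is `(a/b)₊₊ ∈ EReal`, the ratio `a/b` computed with the conventions `0/0 = 0`,
`z/0 = sign(z)·∞`, followed by `(z)₊₊ = z` if `z > 0` and `+∞` if `z ≤ 0`. -/
def rpp (a b : ℝ) : EReal := if b ≠ 0 ∧ 0 < a / b then ((a / b : ℝ) : EReal) else ⊤

/-- The first point of change for the elastic net homotopy:
`t₁ = min_{j∈J}(−β̂ᵉⁿ_j/ηᵉⁿ_j(0))₊₊ ∧ min_{j∈J^c}((sign(γᵉⁿ_j(0))λ − v_j)/γᵉⁿ_j(0))₊₊`. -/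
def enTOne {n p : ℕ} (x : Fin n → Fin p → ℝ) (ρ : ℝ) (J : Finset (Fin p))
    (xnew : Fin p → ℝ) (βen v : Fin p → ℝ) (lam : ℝ) : EReal :=
  (J.inf fun j => rpp (-(βen j)) (enEta x ρ J xnew j)) ⊓
    (Jᶜ.inf fun j => rpp (Real.sign (enGamma x ρ J xnew j) * lam - v j) (enGamma x ρ J xnew j))

/-- The elastic net homotopy solution: `β(t)_{J} = β̂ᵉⁿ_J + t·ηᵉⁿ(0)`, `β(t)_{J^c} = 0`. -/
def enBetaT {n p : ℕ} (x : Fin n → Fin p → ℝ) (ρ : ℝ) (J : Finset (Fin p))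
    (xnew : Fin p → ℝ) (βen : Fin p → ℝ) (t : ℝ) : Fin p → ℝ := fun j =>
  if j ∈ J then βen j + t * enEta x ρ J xnew j else 0


namespace ElasticNetAux

lemma kkt_min {n p : ℕ} (x : Fin n → Fin p → ℝ) (y : Fin n → ℝ) (xnew : Fin p → ℝ)
    (lam ρ ynew : ℝ) (hlam : 0 ≤ lam) (βs s : Fin p → ℝ)
    (hs1 : ∀ j, |s j| ≤ 1) (hs2 : ∀ j, s j * βs j = |βs j|)
    (hg : ∀ j, (∑ i, (y i - dotp (x i) βs) * x i j)
        + (ynew - dotp xnew βs) * xnew j - ρ * βs j = lam * s j)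
    (β : Fin p → ℝ) :
    enAug x y xnew lam ρ ynew βs + (ρ/2) * ∑ j, (β j - βs j)^2
      ≤ enAug x y xnew lam ρ ynew β := by
  set δ : Fin p → ℝ := fun j => β j - βs j with hδ
  have hd : ∀ a : Fin p → ℝ, dotp a β = dotp a βs + dotp a δ := by
    intro a
    simp only [dotp, hδ, ← Finset.sum_add_distrib]
    exact Finset.sum_congr rfl fun j _ => by ring
  set r : Fin n → ℝ := fun i => y i - dotp (x i) βs with hr
  set e : Fin n → ℝ := fun i => dotp (x i) δ with he
  set rn : ℝ := ynew - dotp xnew βs with hrn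
  set en : ℝ := dotp xnew δ with hen
  have hS1 : ∑ i, (y i - dotp (x i) β)^2
      = ∑ i, (r i)^2 - 2*(∑ i, r i * e i) + ∑ i, (e i)^2 := by
    rw [show ∑ i, (y i - dotp (x i) β)^2
        = ∑ i, ((r i)^2 - 2*(r i * e i) + (e i)^2) from
      Finset.sum_congr rfl fun i _ => by rw [hd (x i)]; ring]
    rw [Finset.sum_add_distrib, Finset.sum_sub_distrib, ← Finset.mul_sum]
  have hS3 : ∑ j, (β j)^2 = ∑ j, (βs j)^2 + 2*(∑ j, βs j * δ j) + ∑ j, (δ j)^2 := by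
    rw [show ∑ j, (β j)^2 = ∑ j, ((βs j)^2 + 2*(βs j * δ j) + (δ j)^2) from
      Finset.sum_congr rfl fun j _ => by simp only [hδ]; ring]
    rw [Finset.sum_add_distrib, Finset.sum_add_distrib, ← Finset.mul_sum]
  have hS7 : ∑ j, |β j| = ∑ j, |βs j| + (∑ j, (|β j| - s j * β j)) + ∑ j, s j * δ j := by
    rw [show ∑ j, |β j| = ∑ j, (|βs j| + (|β j| - s j * β j) + s j * δ j) from
      Finset.sum_congr rfl fun j _ => by
        have := hs2 j; simp only [hδ]; nlinarith [hs2 j]]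
    rw [Finset.sum_add_distrib, Finset.sum_add_distrib]
  have hB : ∑ i, r i * e i
      = lam * (∑ j, s j * δ j) - rn * en + ρ * (∑ j, βs j * δ j) := by
    have h1 : ∑ i, r i * e i = ∑ j, (∑ i, r i * x i j) * δ j := by
      simp only [he, dotp, Finset.mul_sum]
      rw [Finset.sum_comm]
      exact Finset.sum_congr rfl fun j _ => by
        rw [Finset.sum_mul]; exact Finset.sum_congr rfl fun i _ => by ring
    have h2 : ∀ j, (∑ i, r i * x i j) = lam * s j - rn * xnew j + ρ * βs j := by
      intro j; have := hg j; simp only [hr]; linarith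
    rw [h1, Finset.sum_congr rfl fun j _ => by rw [h2 j]]
    have h3 : en = ∑ j, xnew j * δ j := rfl
    rw [h3]
    simp only [add_mul, sub_mul, Finset.sum_add_distrib, Finset.sum_sub_distrib,
      Finset.mul_sum]
    congr 1
    · congr 1
      · exact Finset.sum_congr rfl fun j _ => by ring
      · exact Finset.sum_congr rfl fun j _ => by ring
    · exact Finset.sum_congr rfl fun j _ => by ring
  have hexpand : enAug x y xnew lam ρ ynew β
      = enAug x y xnew lam ρ ynew βs + lam * (∑ j, (|β j| - s j * β j))
        + (1/2) * ∑ i, (e i)^2 + (1/2) * en^2 + (ρ/2) * ∑ j, (δ j)^2 := by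
    unfold enAug enObj
    rw [hS1, hS3, hS7, hd xnew, hB]
    have h4 : dotp xnew δ = en := rfl
    rw [h4]
    ring
  have hpos : 0 ≤ ∑ j, (|β j| - s j * β j) := by
    apply Finset.sum_nonneg
    intro j _
    have h1 : s j * β j ≤ |s j * β j| := le_abs_self _
    have h2 : |s j * β j| = |s j| * |β j| := abs_mul _ _
    have h3 : |s j| * |β j| ≤ 1 * |β j| :=
      mul_le_mul_of_nonneg_right (hs1 j) (abs_nonneg _)
    nlinarith
  have hq1 : 0 ≤ ∑ i, (e i)^2 := Finset.sum_nonneg fun i _ => sq_nonneg _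
  have hq2 : 0 ≤ en^2 := sq_nonneg _
  have h5 : (ρ/2) * ∑ j, (δ j)^2 = (ρ/2) * ∑ j, (β j - βs j)^2 := by simp [hδ]
  nlinarith [mul_nonneg hlam hpos]

lemma enObj_update {n p : ℕ} (x : Fin n → Fin p → ℝ) (y : Fin n → ℝ) (lam ρ : ℝ)
    (β : Fin p → ℝ) (j : Fin p) (ε : ℝ) :
    enObj x y lam ρ (Function.update β j (β j + ε))
      = enObj x y lam ρ β + ε * (-(∑ i, (y i - dotp (x i) β) * x i j) + ρ * β j)
        + ε^2/2 * ((∑ i, (x i j)^2) + ρ) + lam * (|β j + ε| - |β j|) := by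
  classical
  have hdot : ∀ a : Fin p → ℝ, dotp a (Function.update β j (β j + ε))
      = dotp a β + ε * a j := by
    intro a
    unfold dotp
    rw [show ∑ k, a k * Function.update β j (β j + ε) k
        = ∑ k, (a k * β k + if k = j then a k * ε else 0) from
      Finset.sum_congr rfl fun k _ => by
        by_cases h : k = j
        · subst h; simp [Function.update]; ring
        · simp [Function.update, h]]
    rw [Finset.sum_add_distrib, Finset.sum_ite_eq' Finset.univ j (fun k => a k * ε)]
    simp [mul_comm]
  have habs : ∑ k, |Function.update β j (β j + ε) k|
      = ∑ k, |β k| + (|β j + ε| - |β j|) := by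
    have h6 : (fun k => |Function.update β j (β j + ε) k|)
        = Function.update (fun k => |β k|) j (|β j + ε|) := by
      funext k
      by_cases h : k = j
      · subst h; simp [Function.update]
      · simp [Function.update, h]
    rw [show ∑ k, |Function.update β j (β j + ε) k|
        = ∑ k, Function.update (fun k => |β k|) j (|β j + ε|) k from by rw [h6]]
    rw [Finset.sum_update_of_mem (Finset.mem_univ j)]
    rw [Finset.sum_sdiff_eq_sub (Finset.singleton_subset_iff.2 (Finset.mem_univ j))]
    simp [Finset.sum_singleton]
    ring
  have hsq : ∑ k, (Function.update β j (β j + ε) k)^2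
      = ∑ k, (β k)^2 + ((β j + ε)^2 - (β j)^2) := by
    have h6 : (fun k => (Function.update β j (β j + ε) k)^2)
        = Function.update (fun k => (β k)^2) j ((β j + ε)^2) := by
      funext k
      by_cases h : k = j
      · subst h; simp [Function.update]
      · simp [Function.update, h]
    rw [show ∑ k, (Function.update β j (β j + ε) k)^2
        = ∑ k, Function.update (fun k => (β k)^2) j ((β j + ε)^2) k from by rw [h6]]
    rw [Finset.sum_update_of_mem (Finset.mem_univ j)]
    rw [Finset.sum_sdiff_eq_sub (Finset.singleton_subset_iff.2 (Finset.mem_univ j))]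
    simp [Finset.sum_singleton]
    ring
  have hres : ∑ i, (y i - dotp (x i) (Function.update β j (β j + ε)))^2
      = ∑ i, (y i - dotp (x i) β)^2
        - 2*ε*(∑ i, (y i - dotp (x i) β) * x i j) + ε^2 * ∑ i, (x i j)^2 := by
    rw [show ∑ i, (y i - dotp (x i) (Function.update β j (β j + ε)))^2
        = ∑ i, ((y i - dotp (x i) β)^2 - 2*ε*((y i - dotp (x i) β) * x i j)
            + ε^2 * (x i j)^2) from
      Finset.sum_congr rfl fun i _ => by rw [hdot (x i)]; ring]
    rw [Finset.sum_add_distrib, Finset.sum_sub_distrib, ← Finset.mul_sum, ← Finset.mul_sum]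
  unfold enObj
  rw [hres, habs, hsq]
  ring

lemma kkt_support {n p : ℕ} (x : Fin n → Fin p → ℝ) (y : Fin n → ℝ) (lam ρ : ℝ)
    (hρ : 0 < ρ) (βen : Fin p → ℝ)
    (hmin : ∀ β, enObj x y lam ρ βen ≤ enObj x y lam ρ β)
    (j : Fin p) (hj : βen j ≠ 0) :
    (∑ i, (y i - dotp (x i) βen) * x i j) - ρ * βen j
      = lam * (if 0 < βen j then 1 else -1) := by
  set sg : ℝ := if 0 < βen j then 1 else -1 with hsg
  set a : ℝ := -((∑ i, (y i - dotp (x i) βen) * x i j) - ρ * βen j) + lam * sg with ha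
  set c : ℝ := (∑ i, (x i j)^2) + ρ with hc
  have hc0 : 0 < c := by
    have h7 : (0:ℝ) ≤ ∑ i, (x i j)^2 := Finset.sum_nonneg fun i _ => sq_nonneg _
    simp only [hc]; linarith
  suffices hsuf : a = 0 by
    simp only [ha] at hsuf; linarith
  by_contra hne
  set m : ℝ := min (|a|/c) (|βen j|/2) with hm
  have hm0 : 0 < m := by
    apply lt_min
    · exact div_pos (abs_pos.2 hne) hc0
    · have := abs_pos.2 hj; linarith
  have hmb : m < |βen j| := by
    have h1 : m ≤ |βen j|/2 := min_le_right _ _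
    have := abs_pos.2 hj; linarith
  set ε : ℝ := if 0 < a then -m else m with hε
  have hεa : ε * a = -(m * |a|) := by
    rcases lt_trichotomy a 0 with h | h | h
    · rw [hε, if_neg (by linarith), abs_of_neg h]; ring
    · exact absurd h hne
    · rw [hε, if_pos h, abs_of_pos h]; ring
  have hεm : |ε| = m := by
    rcases le_or_gt a 0 with h | h
    · rw [hε, if_neg (not_lt.2 h), abs_of_pos hm0]
    · rw [hε, if_pos h, abs_neg, abs_of_pos hm0]
  have habs : |βen j + ε| - |βen j| = ε * sg := by
    rcases lt_trichotomy (βen j) 0 with h | h | h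
    · have h1 : βen j + ε < 0 := by
        have h8 : ε ≤ |ε| := le_abs_self _
        rw [hεm] at h8
        rw [abs_of_neg h] at hmb
        linarith
      rw [abs_of_neg h, abs_of_neg h1, hsg, if_neg (by linarith)]; ring
    · exact absurd h hj
    · have h1 : 0 < βen j + ε := by
        have h8 : -ε ≤ |ε| := neg_le_abs _
        rw [hεm] at h8
        rw [abs_of_pos h] at hmb
        linarith
      rw [abs_of_pos h, abs_of_pos h1, hsg, if_pos h]; ring
  have hkey := hmin (Function.update βen j (βen j + ε))
  rw [enObj_update x y lam ρ βen j ε, habs] at hkey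
  have hq : ε^2 = m^2 := by rw [← sq_abs, hεm]
  have hma : m * c ≤ |a| := by
    have h1 : m ≤ |a|/c := min_le_left _ _
    calc m * c ≤ (|a|/c) * c := by nlinarith
    _ = |a| := by field_simp
  rw [← hc] at hkey
  have h0 : 0 ≤ ε * a + ε^2/2*c := by linarith
  rw [hεa, hq] at h0
  nlinarith [abs_pos.2 hne]

end ElasticNetAux

namespace ElasticNetAux

/-- `w` = `M⁻¹x_{new,J}` extended by zero off `J`. -/
def wvec {n p : ℕ} (x : Fin n → Fin p → ℝ) (ρ : ℝ) (J : Finset (Fin p))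
    (xnew : Fin p → ℝ) : Fin p → ℝ := fun j =>
  if h : j ∈ J then enInvPart x ρ J xnew ⟨j, h⟩ else 0

lemma enEta_eq_wvec {n p : ℕ} (x : Fin n → Fin p → ℝ) (ρ : ℝ) (J : Finset (Fin p))
    (xnew : Fin p → ℝ) (j : Fin p) :
    enEta x ρ J xnew j = wvec x ρ J xnew j / enDenom x ρ J xnew := by
  unfold enEta wvec
  by_cases h : j ∈ J <;> simp [h]

lemma dotp_wvec {n p : ℕ} (x : Fin n → Fin p → ℝ) (ρ : ℝ) (J : Finset (Fin p))
    (xnew : Fin p → ℝ) (a : Fin p → ℝ) :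
    dotp a (wvec x ρ J xnew) = ∑ b : ↥J, a b.1 * enInvPart x ρ J xnew b := by
  classical
  unfold dotp
  rw [← Finset.sum_subset (Finset.subset_univ J)
    (fun j _ hj => by simp [wvec, hj])]
  rw [← Finset.sum_coe_sort J (fun j => a j * wvec x ρ J xnew j)]
  exact Finset.sum_congr rfl fun b _ => by
    congr 1
    exact dif_pos b.2

lemma swap_sum {n p : ℕ} (x : Fin n → Fin p → ℝ) (ρ : ℝ) (J : Finset (Fin p))
    (xnew : Fin p → ℝ) (j : Fin p) :
    ∑ i, x i j * dotp (x i) (wvec x ρ J xnew)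
      = ∑ b : ↥J, (∑ i, x i j * x i b.1) * enInvPart x ρ J xnew b := by
  rw [Finset.sum_congr rfl fun i _ => by rw [dotp_wvec x ρ J xnew (x i)]]
  rw [Finset.sum_congr rfl fun i (_ : i ∈ Finset.univ) => Finset.mul_sum _ _ (x i j)]
  rw [Finset.sum_comm]
  refine Finset.sum_congr rfl fun b _ => ?_
  rw [Finset.sum_mul]
  exact Finset.sum_congr rfl fun i _ => by ring

lemma enMat_posDef {n p : ℕ} (x : Fin n → Fin p → ℝ) {ρ : ℝ} (hρ : 0 < ρ)
    (J : Finset (Fin p)) : (enMat x ρ J).PosDef := by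
  classical
  have hquad : ∀ u : ↥J → ℝ, u ⬝ᵥ (enMat x ρ J *ᵥ u)
      = (∑ i, (∑ a, u a * x i a.1)^2) + ρ * ∑ a, (u a)^2 := by
    intro u
    simp only [dotProduct, Matrix.mulVec, enMat, Matrix.of_apply]
    have h1 : ∀ a : ↥J, (∑ b, ((∑ i, x i a.1 * x i b.1) + if a = b then ρ else 0) * u b)
        = (∑ b, (∑ i, x i a.1 * x i b.1) * u b) + ρ * u a := by
      intro a
      rw [show (fun b => ((∑ i, x i a.1 * x i b.1) + if a = b then ρ else 0) * u b)
          = fun b => (∑ i, x i a.1 * x i b.1) * u b + (if a = b then ρ * u b else 0) from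
        funext fun b => by by_cases h : a = b <;> simp [h]; ring]
      rw [Finset.sum_add_distrib, Finset.sum_ite_eq Finset.univ a (fun b => ρ * u b)]
      simp
    rw [Finset.sum_congr rfl fun a _ => by rw [h1 a]]
    rw [Finset.sum_congr rfl fun a _ => mul_add (u a) _ _]
    rw [Finset.sum_add_distrib]
    congr 1
    · have h2 : ∀ i, (∑ a, u a * x i a.1)^2
          = ∑ a, ∑ b, (u a * x i a.1) * (u b * x i b.1) := by
        intro i; rw [sq, Finset.sum_mul_sum]
      rw [Finset.sum_congr rfl fun i _ => h2 i]
      rw [Finset.sum_comm]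
      refine Finset.sum_congr rfl fun a _ => ?_
      rw [Finset.mul_sum]
      rw [Finset.sum_comm]
      refine Finset.sum_congr rfl fun b _ => ?_
      simp only [Finset.mul_sum, Finset.sum_mul]
      exact Finset.sum_congr rfl fun i _ => by ring
    · rw [Finset.mul_sum]
      exact Finset.sum_congr rfl fun a _ => by ring
  refine Matrix.PosDef.of_dotProduct_mulVec_pos ?_ ?_
  · rw [Matrix.IsHermitian]
    ext a b
    simp only [Matrix.conjTranspose_apply, enMat, Matrix.of_apply, star_trivial]
    congr 1
    · exact Finset.sum_congr rfl fun i _ => mul_comm _ _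
    · simp [eq_comm]
  · intro u hu
    have h0 : star u = u := by funext a; simp
    rw [h0, hquad u]
    have h1 : 0 < ∑ a, (u a)^2 := by
      obtain ⟨a, ha⟩ := Function.ne_iff.1 hu
      exact Finset.sum_pos' (fun b _ => sq_nonneg _)
        ⟨a, Finset.mem_univ a, by have h := abs_pos.2 ha; nlinarith [sq_abs (u a)]⟩
    have h3 : 0 ≤ ∑ i, (∑ a, u a * x i a.1)^2 :=
      Finset.sum_nonneg fun i _ => sq_nonneg _
    nlinarith

lemma enDenom_pos {n p : ℕ} (x : Fin n → Fin p → ℝ) {ρ : ℝ} (hρ : 0 < ρ)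
    (J : Finset (Fin p)) (xnew : Fin p → ℝ) : 0 < enDenom x ρ J xnew := by
  classical
  have hpd := (enMat_posDef x hρ J).inv
  have h0 : 0 ≤ subv xnew J ⬝ᵥ enInvPart x ρ J xnew := by
    have := hpd.posSemidef.re_dotProduct_nonneg (subv xnew J)
    simpa [enInvPart, dotProduct] using this
  unfold enDenom
  linarith

lemma enMat_mulVec_invPart {n p : ℕ} (x : Fin n → Fin p → ℝ) {ρ : ℝ} (hρ : 0 < ρ)
    (J : Finset (Fin p)) (xnew : Fin p → ℝ) :
    enMat x ρ J *ᵥ enInvPart x ρ J xnew = subv xnew J := by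
  classical
  have hMdet : IsUnit (enMat x ρ J).det :=
    (Matrix.isUnit_iff_isUnit_det _).1 (enMat_posDef x hρ J).isUnit
  unfold enInvPart
  rw [Matrix.mulVec_mulVec, Matrix.mul_nonsing_inv _ hMdet, Matrix.one_mulVec]

lemma enMat_row {n p : ℕ} (x : Fin n → Fin p → ℝ) {ρ : ℝ} (hρ : 0 < ρ)
    (J : Finset (Fin p)) (xnew : Fin p → ℝ) (b : ↥J) :
    (∑ i, x i b.1 * dotp (x i) (wvec x ρ J xnew)) + ρ * enInvPart x ρ J xnew b
      = xnew b.1 := by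
  classical
  have h1 := congrFun (enMat_mulVec_invPart x hρ J xnew) b
  have h2 : (enMat x ρ J *ᵥ enInvPart x ρ J xnew) b
      = (∑ a : ↥J, (∑ i, x i b.1 * x i a.1) * enInvPart x ρ J xnew a)
        + ρ * enInvPart x ρ J xnew b := by
    simp only [Matrix.mulVec, dotProduct, enMat, Matrix.of_apply]
    rw [show (fun a => ((∑ i, x i b.1 * x i a.1) + if b = a then ρ else 0)
          * enInvPart x ρ J xnew a)
        = fun a => (∑ i, x i b.1 * x i a.1) * enInvPart x ρ J xnew a
          + (if b = a then ρ * enInvPart x ρ J xnew a else 0) from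
      funext fun a => by by_cases h : b = a <;> simp [h]; ring]
    rw [Finset.sum_add_distrib,
      Finset.sum_ite_eq Finset.univ b (fun a => ρ * enInvPart x ρ J xnew a)]
    simp
  rw [h2] at h1
  rw [← swap_sum x ρ J xnew b.1] at h1
  exact h1

lemma dotp_wvec_xnew {n p : ℕ} (x : Fin n → Fin p → ℝ) (ρ : ℝ)
    (J : Finset (Fin p)) (xnew : Fin p → ℝ) :
    dotp xnew (wvec x ρ J xnew) = enDenom x ρ J xnew - 1 := by
  rw [dotp_wvec]
  unfold enDenom
  simp only [dotProduct, subv]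
  ring

lemma rpp_le {a b t : ℝ} (h : (t : EReal) ≤ rpp a b) (hb : b ≠ 0) (hab : 0 < a / b) :
    t ≤ a / b := by
  unfold rpp at h
  rw [if_pos ⟨hb, hab⟩] at h
  exact_mod_cast h

end ElasticNetAux

open ElasticNetAux

/-- Corollary 1 of the paper: the initial piece of the perturb-one homotopy for
the elastic net.  With `M = nΣ̂_{J₀} + ρI` (which is invertible), dual vector
`v = ∑ᵢ(yᵢ − xᵢ'β̂ᵉⁿ)xᵢ − ρβ̂ᵉⁿ` strictly feasible off the support `J₀`, and `t₁` defined via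
`ηᵉⁿ(0)`, `γᵉⁿ(0)`, for every `t ∈ [0, t₁]` the vector `β(t)` with
`β(t)_{J₀} = β̂ᵉⁿ_{J₀} + t·ηᵉⁿ(0)` and `β(t)_{J₀^c} = 0` is the unique minimizer of the
augmented elastic net objective `G(β) + (1/2)(x_{n+1}'β̂ᵉⁿ + t − x_{n+1}'β)²`. -/
theorem elastic_net_homotopy_initial_piece {n p : ℕ} (x : Fin n → Fin p → ℝ)
    (y : Fin n → ℝ) (xnew : Fin p → ℝ) (lam ρ : ℝ) (hlam : 0 < lam) (hρ : 0 < ρ)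
    (βen : Fin p → ℝ)
    (hmin : ∀ β, enObj x y lam ρ βen ≤ enObj x y lam ρ β)
    (J₀ : Finset (Fin p)) (hJ₀ : ∀ j, j ∈ J₀ ↔ βen j ≠ 0)
    (v : Fin p → ℝ)
    (hv : ∀ j, (∑ i, (y i - dotp (x i) βen) * x i j) - ρ * βen j = v j)
    (hstrict : ∀ j ∉ J₀, |v j| < lam) :
    IsUnit (enMat x ρ J₀) ∧
    ∀ t : ℝ, 0 ≤ t → (t : EReal) ≤ enTOne x ρ J₀ xnew βen v lam →
      (∀ β, enAug x y xnew lam ρ (dotp xnew βen + t) (enBetaT x ρ J₀ xnew βen t) ≤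
        enAug x y xnew lam ρ (dotp xnew βen + t) β) ∧
      (∀ b : Fin p → ℝ,
        (∀ β, enAug x y xnew lam ρ (dotp xnew βen + t) b ≤
          enAug x y xnew lam ρ (dotp xnew βen + t) β) → b = enBetaT x ρ J₀ xnew βen t) := by
  classical
  refine ⟨(enMat_posDef x hρ J₀).isUnit, ?_⟩
  intro t ht ht1
  set w : Fin p → ℝ := wvec x ρ J₀ xnew with hwdef
  set D : ℝ := enDenom x ρ J₀ xnew with hDdef
  set γ : Fin p → ℝ := enGamma x ρ J₀ xnew with hγdef
  have hD0 : 0 < D := enDenom_pos x hρ J₀ xnew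
  have hDne : D ≠ 0 := ne_of_gt hD0
  -- the homotopy point, coordinatewise
  set βs : Fin p → ℝ := enBetaT x ρ J₀ xnew βen t with hβsdef
  have hβs : ∀ j, βs j = βen j + t * (w j / D) := by
    intro j
    rw [hβsdef]
    unfold enBetaT
    by_cases h : j ∈ J₀
    · rw [if_pos h, enEta_eq_wvec]
    · rw [if_neg h]
      have h1 : βen j = 0 := by
        by_contra h2; exact h ((hJ₀ j).2 h2)
      have h2 : w j = 0 := by rw [hwdef]; unfold wvec; rw [dif_neg h]
      rw [h1, h2]; ring
  have hβs0 : ∀ j ∉ J₀, βs j = 0 := by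
    intro j hj; rw [hβsdef]; unfold enBetaT; rw [if_neg hj]
  -- dot products with βs
  have hβd : ∀ a : Fin p → ℝ, dotp a βs = dotp a βen + (t/D) * dotp a w := by
    intro a
    unfold dotp
    rw [Finset.mul_sum, ← Finset.sum_add_distrib]
    refine Finset.sum_congr rfl fun j _ => ?_
    rw [hβs j]; field_simp
  have hwx : dotp xnew w = D - 1 := dotp_wvec_xnew x ρ J₀ xnew
  have hrn : (dotp xnew βen + t) - dotp xnew βs = t / D := by
    rw [hβd xnew, hwx]; field_simp; ring
  have hres : ∀ j, ∑ i, (y i - dotp (x i) βs) * x i j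
      = (∑ i, (y i - dotp (x i) βen) * x i j) - (t/D) * ∑ i, dotp (x i) w * x i j := by
    intro j
    rw [Finset.mul_sum, ← Finset.sum_sub_distrib]
    refine Finset.sum_congr rfl fun i _ => ?_
    rw [hβd (x i)]; ring
  -- the subgradient vector
  set s : Fin p → ℝ := fun j =>
    if j ∈ J₀ then (if 0 < βen j then 1 else -1) else (v j + t * γ j) / lam with hsdef
  -- KKT at βen on the support
  have hkkt : ∀ j ∈ J₀, v j = lam * (if 0 < βen j then 1 else -1) := by
    intro j hj
    rw [← hv j]
    exact kkt_support x y lam ρ hρ βen hmin j ((hJ₀ j).1 hj)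
  -- bound extraction
  have htJ : ∀ j ∈ J₀, (t : EReal) ≤ rpp (-(βen j)) (enEta x ρ J₀ xnew j) := by
    intro j hj
    exact le_trans ht1 (le_trans inf_le_left (Finset.inf_le hj))
  have htJc : ∀ j ∉ J₀,
      (t : EReal) ≤ rpp (Real.sign (γ j) * lam - v j) (γ j) := by
    intro j hj
    exact le_trans ht1 (le_trans inf_le_right (Finset.inf_le (Finset.mem_compl.2 hj)))
  -- the gradient identity
  have hγD : ∀ j, γ j = (xnew j - ∑ i, x i j * dotp (x i) w) / D := by
    intro j
    rw [hγdef]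
    unfold enGamma
    rw [hwdef, swap_sum]
  have hg : ∀ j, (∑ i, (y i - dotp (x i) βs) * x i j)
      + ((dotp xnew βen + t) - dotp xnew βs) * xnew j - ρ * βs j = lam * s j := by
    intro j
    rw [hres j, hrn, hβs j]
    have hcomm : ∑ i, dotp (x i) w * x i j = ∑ i, x i j * dotp (x i) w :=
      Finset.sum_congr rfl fun i _ => mul_comm _ _
    rw [hcomm]
    by_cases h : j ∈ J₀
    · have hrow := enMat_row x hρ J₀ xnew ⟨j, h⟩
      have hwj : w j = enInvPart x ρ J₀ xnew ⟨j, h⟩ := by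
        rw [hwdef]; unfold wvec; rw [dif_pos h]
      rw [← hwj] at hrow
      have hvj := hv j
      have hkj := hkkt j h
      rw [hsdef]
      simp only [if_pos h]
      have hrow' : (∑ i, x i j * dotp (x i) w) + ρ * w j = xnew j := hrow
      rw [← hkj, ← hvj]
      linear_combination (-(t/D)) * hrow'
    · have hwj : w j = 0 := by rw [hwdef]; unfold wvec; rw [dif_neg h]
      have hbj : βen j = 0 := by by_contra h2; exact h ((hJ₀ j).2 h2)
      have hvj := hv j
      rw [hbj] at hvj
      rw [hsdef]
      simp only [if_neg h]
      have hls : lam * ((v j + t * γ j) / lam) = v j + t * γ j := by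
        field_simp
      rw [hls, hwj, hbj, hγD j]
      linear_combination hvj
  -- subgradient conditions
  have hη : ∀ j, enEta x ρ J₀ xnew j = w j / D := fun j => enEta_eq_wvec x ρ J₀ xnew j
  have hs1 : ∀ j, |s j| ≤ 1 := by
    intro j
    rw [hsdef]
    by_cases h : j ∈ J₀
    · simp only [if_pos h]
      by_cases h2 : 0 < βen j <;> simp [h2]
    · simp only [if_neg h]
      have habs : |v j + t * γ j| ≤ lam := by
        rcases lt_trichotomy (γ j) 0 with hγ | hγ | hγ
        · have hsgn : Real.sign (γ j) = -1 := Real.sign_of_neg hγ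
          have hnum : Real.sign (γ j) * lam - v j < 0 := by
            have := (abs_lt.1 (hstrict j h)).1
            rw [hsgn]; linarith
          have hpos : 0 < (Real.sign (γ j) * lam - v j) / γ j :=
            div_pos_of_neg_of_neg hnum hγ
          have hle := rpp_le (htJc j h) (ne_of_lt hγ) hpos
          have h3 : (Real.sign (γ j) * lam - v j) / γ j * γ j
              = Real.sign (γ j) * lam - v j := div_mul_cancel₀ _ (ne_of_lt hγ)
          have h4 : t * γ j ≥ Real.sign (γ j) * lam - v j := by
            have := mul_le_mul_of_nonpos_right hle (le_of_lt hγ)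
            rw [h3] at this; linarith
          rw [hsgn] at h4
          have h5 : t * γ j ≤ 0 := mul_nonpos_of_nonneg_of_nonpos ht (le_of_lt hγ)
          have h6 := (abs_lt.1 (hstrict j h)).2
          rw [abs_le]; constructor <;> linarith
        · rw [hγ]
          have := abs_lt.1 (hstrict j h)
          rw [abs_le]; constructor <;> [linarith; linarith]
        · have hsgn : Real.sign (γ j) = 1 := Real.sign_of_pos hγ
          have hnum : 0 < Real.sign (γ j) * lam - v j := by
            have := (abs_lt.1 (hstrict j h)).2
            rw [hsgn]; linarith
          have hpos : 0 < (Real.sign (γ j) * lam - v j) / γ j := div_pos hnum hγ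
          have hle := rpp_le (htJc j h) (ne_of_gt hγ) hpos
          have h4 : t * γ j ≤ Real.sign (γ j) * lam - v j := by
            have h3 := mul_le_mul_of_nonneg_right hle (le_of_lt hγ)
            rw [div_mul_cancel₀ _ (ne_of_gt hγ)] at h3; linarith
          rw [hsgn] at h4
          have h5 : 0 ≤ t * γ j := mul_nonneg ht (le_of_lt hγ)
          have h6 := (abs_lt.1 (hstrict j h)).1
          rw [abs_le]; constructor <;> linarith
      rw [abs_div, abs_of_pos hlam, div_le_one hlam]
      exact habs
  have hs2 : ∀ j, s j * βs j = |βs j| := by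
    intro j
    by_cases h : j ∈ J₀
    · have hbj : βen j ≠ 0 := (hJ₀ j).1 h
      have hts := htJ j h
      rw [hη j] at hts
      rw [hsdef]; simp only [if_pos h]
      rw [hβs j]
      set z : ℝ := βen j + t * (w j / D) with hz
      set e : ℝ := w j / D with he
      rcases lt_trichotomy (βen j) 0 with hb | hb | hb
      · have hsign : z ≤ 0 := by
          rcases le_or_gt e 0 with he2 | he2
          · have : t * e ≤ 0 := mul_nonpos_of_nonneg_of_nonpos ht he2
            rw [hz]; linarith
          · have hpos : 0 < -(βen j) / e := div_pos (by linarith) he2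
            have hle := rpp_le hts (ne_of_gt he2) hpos
            have h3 := mul_le_mul_of_nonneg_right hle (le_of_lt he2)
            rw [div_mul_cancel₀ _ (ne_of_gt he2)] at h3
            rw [hz]; linarith
        rw [if_neg (by linarith : ¬ 0 < βen j), abs_of_nonpos hsign]; ring
      · exact absurd hb hbj
      · have hsign : 0 ≤ z := by
          rcases le_or_gt 0 e with he2 | he2
          · have : 0 ≤ t * e := mul_nonneg ht he2
            rw [hz]; linarith
          · have hpos : 0 < -(βen j) / e := div_pos_of_neg_of_neg (by linarith) he2
            have hle := rpp_le hts (ne_of_lt he2) hpos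
            have h3 := mul_le_mul_of_nonpos_right hle (le_of_lt he2)
            rw [div_mul_cancel₀ _ (ne_of_lt he2)] at h3
            rw [hz]; linarith
        rw [if_pos hb, abs_of_nonneg hsign]; ring
    · rw [hβs0 j h]; simp
  -- conclude via the strong-convexity KKT lemma
  have hkey := kkt_min x y xnew lam ρ (dotp xnew βen + t) (le_of_lt hlam) βs s hs1 hs2 hg
  constructor
  · intro β
    have h1 := hkey β
    have h2 : 0 ≤ (ρ/2) * ∑ j, (β j - βs j)^2 := by
      apply mul_nonneg (by linarith)
      exact Finset.sum_nonneg fun j _ => sq_nonneg _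
    linarith
  · intro b hb
    have h1 := hkey b
    have h2 := hb βs
    have hsum0 : ∑ j, (b j - βs j)^2 = 0 := by
      have h3 : 0 ≤ ∑ j, (b j - βs j)^2 :=
        Finset.sum_nonneg fun j _ => sq_nonneg _
      nlinarith
    have h4 := (Finset.sum_eq_zero_iff_of_nonneg
      (fun j (_ : j ∈ Finset.univ) => sq_nonneg (b j - βs j))).1 hsum0
    funext j
    have h5 := h4 j (Finset.mem_univ j)
    have h6 : b j - βs j = 0 := by
      nlinarith [sq_nonneg (b j - βs j)]
    rw [hβsdef] at h6
    linarith
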